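/- (Theorem 2.2, cross-covariance expansion) Fix real numbers a11, a12, a21, a22, σx, σy, R with a22 ≠ 0, R > 0, ã < 0. Let ε₀ > 0 and let a, s̃, e11, e12, e22, e13, e23, e33 : (0, ε₀) → ℝ be bounded functions with a(ε) ≤ 0 and s̃(ε) ≥ 0, such that for each ε: (e11(ε), e12(ε), e22(ε)) solves the two-scale Lyapunov system, and (e13(ε), e23(ε), e33(ε)) solves the filter Lyapunov system with parameters a(ε), s̃(ε) and data (e11(ε), e12(ε)). Then e13(ε) = −s̃(ε)*e11(ε)/(ã*(1 − ε*â)*R + a(ε)*R − s̃(ε)) + O(ε²) as ε → 0⁺. -/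

import Mathlib

lemma abs_sub'' (a b : ℝ) : |a - b| ≤ |a| + |b| := by
  rw [sub_eq_add_neg]
  exact (abs_add_le _ _).trans (le_of_eq (by rw [abs_neg]))

lemma stmt8_cert (a11 a12 a21 a22 R ε A S E11 E12 E22 E13 E23 : ℝ)
    (ha22 : a22 ≠ 0) (hR : R ≠ 0) :
    (E13 * ((a11 - a12 * a21 / a22) * (1 - ε * (a12 * a21 / a22 ^ 2)) * R + A * R - S)
        + S * E11) *
      ((a11 + (A - S / R)) * (a22 + ε * (A - S / R)) - a12 * a21) * (R ^ 2 * a22 ^ 4)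
    = ε ^ 2 * S *
        (R * (E11 * (a11 * a22 - a12 * a21) * (a12 * a21) * ((A * R - S) * a22 + a12 * a21 * R)
          - a12 * (a11 * E12 + a12 * E22) *
            (a22 ^ 2 * ((a11 * a22 - a12 * a21) * R + (A * R - S) * a22)
              - ε * (a11 * a22 - a12 * a21) * (a12 * a21) * R)))
      + ((a11 * a22 - a12 * a21) * (a22 ^ 2 - ε * (a12 * a21)) * R + (A * R - S) * a22 ^ 3)
          * (a22 ^ 2 * R + ε * (A * R - S) * a22)
          * (a11 * E13 * R + a12 * E23 * R + E13 * (A * R - S) + E11 * S)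
      - ((a11 * a22 - a12 * a21) * (a22 ^ 2 - ε * (a12 * a21)) * R + (A * R - S) * a22 ^ 3)
          * a12 * R * a22
          * (a21 * E13 * R + a22 * E23 * R + ε * E23 * (A * R - S) + ε * E12 * S)
      + ε * S * a12
          * ((a11 * a22 - a12 * a21) * (a22 ^ 2 - ε * (a12 * a21)) * R + (A * R - S) * a22 ^ 3)
          * R * (ε * (a11 * E12 + a12 * E22) + E11 * a21 + E12 * a22) := by
  field_simp
  ring

/-- `f = O(ε²)` as `ε → 0⁺`, with the bound holding inside `(0, ε₀)`. -/
def IsO2 (ε₀ : ℝ) (f : ℝ → ℝ) : Prop :=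
  ∃ C ε₁ : ℝ, 0 < C ∧ 0 < ε₁ ∧ ε₁ ≤ ε₀ ∧ ∀ ε, 0 < ε → ε < ε₁ → |f ε| ≤ C * ε ^ 2

/-- The two-scale Lyapunov system. -/
def SolvesLyapunov (a11 a12 a21 a22 σx σy ε c11 c12 c22 : ℝ) : Prop :=
  0 = σx ^ 2 + 2 * a11 * c11 + 2 * a12 * c12 ∧
  0 = a11 * c12 + a12 * c22 + c11 * a21 / ε + c12 * a22 / ε ∧
  0 = σy ^ 2 / ε + 2 * c12 * a21 / ε + 2 * c22 * a22 / ε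

/-- The filter Lyapunov system with reduced-filter parameters `a`, `s̃` and
data `(e11, e12)`. -/
def SolvesFilterLyapunov (a11 a12 a21 a22 R ε a stil e11 e12 e13 e23 e33 : ℝ) : Prop :=
  0 = a11 * e13 + a12 * e23 + e13 * (a - stil / R) + e11 * stil / R ∧
  0 = a21 * e13 / ε + a22 * e23 / ε + e23 * (a - stil / R) + e12 * stil / R ∧
  0 = stil ^ 2 / R + 2 * e33 * (a - stil / R) + 2 * e13 * stil / R

set_option maxHeartbeats 1000000 in
/-- Theorem 2.2, cross-covariance expansion:
`e13(ε) = −s̃ e11/(ã(1 − εâ)R + aR − s̃) + O(ε²)` as `ε → 0⁺`. -/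
theorem stmt8 (a11 a12 a21 a22 σx σy R : ℝ) (ha22 : a22 ≠ 0) (hR : 0 < R)
    (hat : a11 - a12 * a21 / a22 < 0)
    (ε₀ : ℝ) (hε₀ : 0 < ε₀)
    (a stil e11 e12 e22 e13 e23 e33 : ℝ → ℝ)
    (hbdd : ∃ M : ℝ, ∀ ε, 0 < ε → ε < ε₀ →
      |a ε| ≤ M ∧ |stil ε| ≤ M ∧ |e11 ε| ≤ M ∧ |e12 ε| ≤ M ∧ |e22 ε| ≤ M ∧
      |e13 ε| ≤ M ∧ |e23 ε| ≤ M ∧ |e33 ε| ≤ M)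
    (ha : ∀ ε, 0 < ε → ε < ε₀ → a ε ≤ 0)
    (hstil : ∀ ε, 0 < ε → ε < ε₀ → 0 ≤ stil ε)
    (hlyap : ∀ ε, 0 < ε → ε < ε₀ →
      SolvesLyapunov a11 a12 a21 a22 σx σy ε (e11 ε) (e12 ε) (e22 ε))
    (hfilt : ∀ ε, 0 < ε → ε < ε₀ →
      SolvesFilterLyapunov a11 a12 a21 a22 R ε (a ε) (stil ε)
        (e11 ε) (e12 ε) (e13 ε) (e23 ε) (e33 ε)) :
    IsO2 ε₀ (fun ε =>
      e13 ε +
        stil ε * e11 ε /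
          ((a11 - a12 * a21 / a22) * (1 - ε * (a12 * a21 / a22 ^ 2)) * R
            + a ε * R - stil ε)) := by
  unfold IsO2
  obtain ⟨M₀, hM₀⟩ := hbdd
  set MM := |M₀| + 1 with hMMdef
  have hMMpos : 0 < MM := by rw [hMMdef]; positivity
  have hM : ∀ ε, 0 < ε → ε < ε₀ →
      |a ε| ≤ MM ∧ |stil ε| ≤ MM ∧ |e11 ε| ≤ MM ∧ |e12 ε| ≤ MM ∧ |e22 ε| ≤ MM ∧
      |e13 ε| ≤ MM ∧ |e23 ε| ≤ MM ∧ |e33 ε| ≤ MM := by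
    intro ε h h'
    have hMle : M₀ ≤ MM := by rw [hMMdef]; linarith [le_abs_self M₀]
    obtain ⟨b1, b2, b3, b4, b5, b6, b7, b8⟩ := hM₀ ε h h'
    exact ⟨b1.trans hMle, b2.trans hMle, b3.trans hMle, b4.trans hMle, b5.trans hMle,
      b6.trans hMle, b7.trans hMle, b8.trans hMle⟩
  set BB := MM + MM / R with hBBdef
  have hBBpos : 0 < BB := by rw [hBBdef]; exact add_pos hMMpos (div_pos hMMpos hR)
  have hmt : 0 < -(a11 - a12 * a21 / a22) := by linarith
  have hMR : (0:ℝ) ≤ MM * R + MM := by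
    have := mul_nonneg hMMpos.le hR.le; linarith
  set q0 := R * (MM * |a11 * a22 - a12 * a21| * |a12 * a21| *
      ((MM * R + MM) * |a22| + |a12 * a21| * R)
    + |a12| * (|a11| * MM + |a12| * MM) *
      (a22 ^ 2 * (|a11 * a22 - a12 * a21| * R + (MM * R + MM) * |a22|)
        + |a11 * a22 - a12 * a21| * |a12 * a21| * R)) with hq0def
  have hq0 : 0 ≤ q0 := by
    rw [hq0def]
    have h1 : (0:ℝ) ≤ MM * |a11 * a22 - a12 * a21| * |a12 * a21| *
        ((MM * R + MM) * |a22| + |a12 * a21| * R) :=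
      mul_nonneg (mul_nonneg (mul_nonneg hMMpos.le (abs_nonneg _)) (abs_nonneg _))
        (add_nonneg (mul_nonneg hMR (abs_nonneg _)) (mul_nonneg (abs_nonneg _) hR.le))
    have h2 : (0:ℝ) ≤ |a12| * (|a11| * MM + |a12| * MM) *
        (a22 ^ 2 * (|a11 * a22 - a12 * a21| * R + (MM * R + MM) * |a22|)
          + |a11 * a22 - a12 * a21| * |a12 * a21| * R) :=
      mul_nonneg (mul_nonneg (abs_nonneg _)
          (add_nonneg (mul_nonneg (abs_nonneg _) hMMpos.le)
            (mul_nonneg (abs_nonneg _) hMMpos.le)))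
        (add_nonneg (mul_nonneg (by positivity)
            (add_nonneg (mul_nonneg (abs_nonneg _) hR.le) (mul_nonneg hMR (abs_nonneg _))))
          (mul_nonneg (mul_nonneg (abs_nonneg _) (abs_nonneg _)) hR.le))
    exact mul_nonneg hR.le (add_nonneg h1 h2)
  set d0 := R * (-(a11 - a12 * a21 / a22)) / 2 *
      ((|a22| * (-(a11 - a12 * a21 / a22)) / 2) * (R ^ 2 * a22 ^ 4)) with hd0def
  have hd0 : 0 < d0 := by
    rw [hd0def]
    have h1 : 0 < R * (-(a11 - a12 * a21 / a22)) / 2 := by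
      have := mul_pos hR hmt; linarith
    have h2 : 0 < |a22| * (-(a11 - a12 * a21 / a22)) / 2 := by
      have := mul_pos (abs_pos.mpr ha22) hmt; linarith
    exact mul_pos h1 (mul_pos h2 (by positivity))
  have hC : 0 < (MM * q0 + 1) / d0 :=
    div_pos (by linarith only [mul_nonneg hMMpos.le hq0]) hd0
  clear_value MM BB q0 d0
  refine ⟨(MM * q0 + 1) / d0,
    min ε₀ (min 1
      (min ((-(a11 - a12 * a21 / a22)) /
          (2 * (|(a11 - a12 * a21 / a22) * (a12 * a21 / a22 ^ 2)| + 1)))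
        (|a22| * (-(a11 - a12 * a21 / a22)) / (2 * (BB * (|a11| + BB) + 1))))),
    hC, ?_, min_le_left _ _, ?_⟩
  · have hBX : (0:ℝ) ≤ BB * (|a11| + BB) :=
      mul_nonneg hBBpos.le (add_nonneg (abs_nonneg _) hBBpos.le)
    refine lt_min hε₀ (lt_min one_pos (lt_min (div_pos hmt (by positivity))
      (div_pos (mul_pos (abs_pos.mpr ha22) hmt) (by linarith))))
  · intro ε hε hεlt
    have hεε₀ : ε < ε₀ := lt_of_lt_of_le hεlt (min_le_left _ _)
    have hε1 : ε ≤ 1 := (lt_of_lt_of_le hεlt ((min_le_right _ _).trans (min_le_left _ _))).le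
    have hεc := (lt_of_lt_of_le hεlt
      ((min_le_right _ _).trans ((min_le_right _ _).trans (min_le_left _ _)))).le
    have hεd := (lt_of_lt_of_le hεlt
      ((min_le_right _ _).trans ((min_le_right _ _).trans (min_le_right _ _)))).le
    obtain ⟨hA, hS, h11, h12b, h22b, h13, h23, -⟩ := hM ε hε hεε₀
    have hRne : R ≠ 0 := hR.ne'
    have hεne : ε ≠ 0 := hε.ne'
    have hAle : a ε ≤ 0 := ha ε hε hεε₀
    have hSge : 0 ≤ stil ε := hstil ε hε hεε₀
    show |e13 ε + stil ε * e11 ε /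
        ((a11 - a12 * a21 / a22) * (1 - ε * (a12 * a21 / a22 ^ 2)) * R
          + a ε * R - stil ε)| ≤ (MM * q0 + 1) / d0 * ε ^ 2
    set tE := a11 - a12 * a21 / a22 with htEdef
    set hhE := a12 * a21 / a22 ^ 2 with hhhEdef
    set bb := a ε - stil ε / R with hbbdef
    set K := tE * (1 - ε * hhE) * R + a ε * R - stil ε with hKdef
    set P := (a11 + bb) * (a22 + ε * bb) - a12 * a21 with hPdef
    set QPv := R * (e11 ε * (a11 * a22 - a12 * a21) * (a12 * a21) *
        ((a ε * R - stil ε) * a22 + a12 * a21 * R)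
      - a12 * (a11 * e12 ε + a12 * e22 ε) *
        (a22 ^ 2 * ((a11 * a22 - a12 * a21) * R + (a ε * R - stil ε) * a22)
          - ε * (a11 * a22 - a12 * a21) * (a12 * a21) * R)) with hQPdef
    clear_value tE hhE bb K P QPv
    -- basic bounds on bb
    have hbble : bb ≤ 0 := by
      rw [hbbdef]
      have : 0 ≤ stil ε / R := div_nonneg hSge hR.le
      linarith
    have hbabs : |bb| ≤ BB := by
      rw [hbbdef, hBBdef]
      have h1 : |a ε - stil ε / R| ≤ |a ε| + |stil ε / R| := abs_sub'' _ _
      have h2 : |stil ε / R| = |stil ε| / R := by rw [abs_div, abs_of_pos hR]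
      have h3 : |stil ε| / R ≤ MM / R := by gcongr
      linarith [h1, h2.le, h2.ge]
    -- K bounds
    have hεc' : ε * (|tE * hhE| + 1) ≤ -tE / 2 := by
      rw [le_div_iff₀ (by positivity : (0:ℝ) < 2 * (|tE * hhE| + 1))] at hεc
      linarith only [hεc, hε.le, abs_nonneg (tE * hhE)]
    have hKle : K ≤ tE * R / 2 := by
      have e1 : K = tE * R + (ε * (-(tE * hhE))) * R + (a ε * R - stil ε) := by
        rw [hKdef]; ring
      have e2 : ε * (-(tE * hhE)) ≤ ε * |tE * hhE| :=
        mul_le_mul_of_nonneg_left (neg_le_abs _) hε.le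
      have e3 : ε * |tE * hhE| ≤ -tE / 2 := by
        linarith only [hεc', hε.le]
      have e4 : a ε * R ≤ 0 := by
        linarith only [mul_nonneg (neg_nonneg.mpr hAle) hR.le]
      have e5 : (ε * (-(tE * hhE))) * R ≤ (-tE / 2) * R :=
        mul_le_mul_of_nonneg_right (e2.trans e3) hR.le
      linarith only [e1.le, e1.ge, e5, e4, hSge]
    have hKneg : K < 0 := by linarith only [hKle, mul_pos hR hmt]
    have hKne : K ≠ 0 := ne_of_lt hKneg
    have hKabs : R * (-tE) / 2 ≤ |K| := by
      rw [abs_of_neg hKneg]; linarith only [hKle]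
    -- P bounds
    have hεd' : ε * (BB * (|a11| + BB)) ≤ |a22| * (-tE) / 2 := by
      have hBX : (0:ℝ) ≤ BB * (|a11| + BB) :=
        mul_nonneg hBBpos.le (add_nonneg (abs_nonneg _) hBBpos.le)
      rw [le_div_iff₀ (by linarith only [hBX] : (0:ℝ) < 2 * (BB * (|a11| + BB) + 1))] at hεd
      linarith only [hεd, hε.le, hBX]
    have hPfact : a22 * (tE + bb) - P = -(ε * (bb * (a11 + bb))) := by
      rw [hPdef, htEdef]; field_simp [ha22]; ring
    have hba : |a11 + bb| ≤ |a11| + BB := (abs_add_le _ _).trans (by linarith only [hbabs])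
    have h7 : |a22 * (tE + bb) - P| ≤ ε * (BB * (|a11| + BB)) := by
      rw [hPfact, abs_neg, abs_mul, abs_mul, abs_of_pos hε]
      apply mul_le_mul_of_nonneg_left _ hε.le
      exact mul_le_mul hbabs hba (abs_nonneg _) hBBpos.le
    have h9 : |a22| * (-tE) ≤ |a22 * (tE + bb)| := by
      rw [abs_mul]
      apply mul_le_mul_of_nonneg_left _ (abs_nonneg a22)
      rw [abs_of_neg (by linarith : tE + bb < 0)]
      linarith
    have hPabs : |a22| * (-tE) / 2 ≤ |P| := by
      have tri : |a22 * (tE + bb)| ≤ |P| + |a22 * (tE + bb) - P| :=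
        calc |a22 * (tE + bb)| = |P + (a22 * (tE + bb) - P)| := by congr 1; ring
        _ ≤ |P| + |a22 * (tE + bb) - P| := abs_add_le _ _
      linarith only [h7, hεd', h9, tri]
    -- QP bound
    have hW : |a ε * R - stil ε| ≤ MM * R + MM := by
      have h1 : |a ε * R| ≤ MM * R := by
        rw [abs_mul, abs_of_pos hR]
        exact mul_le_mul_of_nonneg_right hA hR.le
      calc |a ε * R - stil ε| ≤ |a ε * R| + |stil ε| := abs_sub'' _ _
      _ ≤ MM * R + MM := by linarith only [h1, hS]
    have hL : |a11 * e12 ε + a12 * e22 ε| ≤ |a11| * MM + |a12| * MM := by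
      calc |a11 * e12 ε + a12 * e22 ε| ≤ |a11 * e12 ε| + |a12 * e22 ε| := abs_add_le _ _
      _ = |a11| * |e12 ε| + |a12| * |e22 ε| := by rw [abs_mul, abs_mul]
      _ ≤ |a11| * MM + |a12| * MM :=
        add_le_add (mul_le_mul_of_nonneg_left h12b (abs_nonneg _))
          (mul_le_mul_of_nonneg_left h22b (abs_nonneg _))
    have hXa : |(a ε * R - stil ε) * a22 + a12 * a21 * R|
        ≤ (MM * R + MM) * |a22| + |a12 * a21| * R := by
      have w1 : |(a ε * R - stil ε) * a22| ≤ (MM * R + MM) * |a22| := by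
        rw [abs_mul]; exact mul_le_mul_of_nonneg_right hW (abs_nonneg _)
      have w2 : |a12 * a21 * R| = |a12 * a21| * R := by rw [abs_mul, abs_of_pos hR]
      calc |(a ε * R - stil ε) * a22 + a12 * a21 * R|
          ≤ |(a ε * R - stil ε) * a22| + |a12 * a21 * R| := abs_add_le _ _
      _ ≤ (MM * R + MM) * |a22| + |a12 * a21| * R := by
          linarith only [w1, w2.le, w2.ge]
    have hX1 : |e11 ε * (a11 * a22 - a12 * a21) * (a12 * a21) *
          ((a ε * R - stil ε) * a22 + a12 * a21 * R)|
        ≤ MM * |a11 * a22 - a12 * a21| * |a12 * a21| *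
          ((MM * R + MM) * |a22| + |a12 * a21| * R) := by
      rw [abs_mul, abs_mul, abs_mul]
      have t1 : |e11 ε| * |a11 * a22 - a12 * a21| ≤ MM * |a11 * a22 - a12 * a21| :=
        mul_le_mul_of_nonneg_right h11 (abs_nonneg _)
      have t2 : |e11 ε| * |a11 * a22 - a12 * a21| * |a12 * a21|
          ≤ MM * |a11 * a22 - a12 * a21| * |a12 * a21| :=
        mul_le_mul_of_nonneg_right t1 (abs_nonneg _)
      exact mul_le_mul t2 hXa (abs_nonneg _)
        (mul_nonneg (mul_nonneg hMMpos.le (abs_nonneg _)) (abs_nonneg _))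
    have hXb : |a22 ^ 2 * ((a11 * a22 - a12 * a21) * R + (a ε * R - stil ε) * a22)
          - ε * (a11 * a22 - a12 * a21) * (a12 * a21) * R|
        ≤ a22 ^ 2 * (|a11 * a22 - a12 * a21| * R + (MM * R + MM) * |a22|)
          + |a11 * a22 - a12 * a21| * |a12 * a21| * R := by
      have u1 : |a22 ^ 2 * ((a11 * a22 - a12 * a21) * R + (a ε * R - stil ε) * a22)|
          ≤ a22 ^ 2 * (|a11 * a22 - a12 * a21| * R + (MM * R + MM) * |a22|) := by
        rw [abs_mul, abs_of_nonneg (by positivity : (0:ℝ) ≤ a22 ^ 2)]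
        apply mul_le_mul_of_nonneg_left _ (by positivity)
        have v1 : |(a11 * a22 - a12 * a21) * R| = |a11 * a22 - a12 * a21| * R := by
          rw [abs_mul, abs_of_pos hR]
        have v2 : |(a ε * R - stil ε) * a22| ≤ (MM * R + MM) * |a22| := by
          rw [abs_mul]; exact mul_le_mul_of_nonneg_right hW (abs_nonneg _)
        calc |(a11 * a22 - a12 * a21) * R + (a ε * R - stil ε) * a22|
            ≤ |(a11 * a22 - a12 * a21) * R| + |(a ε * R - stil ε) * a22| := abs_add_le _ _
        _ ≤ |a11 * a22 - a12 * a21| * R + (MM * R + MM) * |a22| := by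
            linarith only [v1.le, v1.ge, v2]
      have u2 : |ε * (a11 * a22 - a12 * a21) * (a12 * a21) * R|
          ≤ |a11 * a22 - a12 * a21| * |a12 * a21| * R := by
        rw [abs_mul, abs_mul, abs_mul, abs_of_pos hε, abs_of_pos hR]
        have w1 : ε * |a11 * a22 - a12 * a21| ≤ |a11 * a22 - a12 * a21| := by
          linarith only [mul_le_mul_of_nonneg_right hε1 (abs_nonneg (a11 * a22 - a12 * a21))]
        exact mul_le_mul_of_nonneg_right
          (mul_le_mul_of_nonneg_right w1 (abs_nonneg _)) hR.le
      calc |a22 ^ 2 * ((a11 * a22 - a12 * a21) * R + (a ε * R - stil ε) * a22)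
            - ε * (a11 * a22 - a12 * a21) * (a12 * a21) * R|
          ≤ |a22 ^ 2 * ((a11 * a22 - a12 * a21) * R + (a ε * R - stil ε) * a22)|
            + |ε * (a11 * a22 - a12 * a21) * (a12 * a21) * R| := abs_sub'' _ _
      _ ≤ _ := by linarith only [u1, u2]
    have hX2 : |a12 * (a11 * e12 ε + a12 * e22 ε) *
          (a22 ^ 2 * ((a11 * a22 - a12 * a21) * R + (a ε * R - stil ε) * a22)
            - ε * (a11 * a22 - a12 * a21) * (a12 * a21) * R)|
        ≤ |a12| * (|a11| * MM + |a12| * MM) *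
          (a22 ^ 2 * (|a11 * a22 - a12 * a21| * R + (MM * R + MM) * |a22|)
            + |a11 * a22 - a12 * a21| * |a12 * a21| * R) := by
      rw [abs_mul, abs_mul]
      exact mul_le_mul (mul_le_mul_of_nonneg_left hL (abs_nonneg _)) hXb (abs_nonneg _)
        (mul_nonneg (abs_nonneg _)
          (add_nonneg (mul_nonneg (abs_nonneg _) hMMpos.le)
            (mul_nonneg (abs_nonneg _) hMMpos.le)))
    have hQP : |QPv| ≤ q0 := by
      rw [hQPdef, hq0def]
      calc |R * (e11 ε * (a11 * a22 - a12 * a21) * (a12 * a21) *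
            ((a ε * R - stil ε) * a22 + a12 * a21 * R)
          - a12 * (a11 * e12 ε + a12 * e22 ε) *
            (a22 ^ 2 * ((a11 * a22 - a12 * a21) * R + (a ε * R - stil ε) * a22)
              - ε * (a11 * a22 - a12 * a21) * (a12 * a21) * R))|
          = R * |e11 ε * (a11 * a22 - a12 * a21) * (a12 * a21) *
            ((a ε * R - stil ε) * a22 + a12 * a21 * R)
          - a12 * (a11 * e12 ε + a12 * e22 ε) *
            (a22 ^ 2 * ((a11 * a22 - a12 * a21) * R + (a ε * R - stil ε) * a22)
              - ε * (a11 * a22 - a12 * a21) * (a12 * a21) * R)| := by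
            rw [abs_mul, abs_of_pos hR]
      _ ≤ R * (|e11 ε * (a11 * a22 - a12 * a21) * (a12 * a21) *
            ((a ε * R - stil ε) * a22 + a12 * a21 * R)|
          + |a12 * (a11 * e12 ε + a12 * e22 ε) *
            (a22 ^ 2 * ((a11 * a22 - a12 * a21) * R + (a ε * R - stil ε) * a22)
              - ε * (a11 * a22 - a12 * a21) * (a12 * a21) * R)|) :=
            mul_le_mul_of_nonneg_left (abs_sub'' _ _) hR.le
      _ ≤ _ := mul_le_mul_of_nonneg_left (add_le_add hX1 hX2) hR.le
    clear hq0def hX1 hX2 hXa hXb hW hL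
    obtain ⟨hf1, hf2, -⟩ := hfilt ε hε hεε₀
    obtain ⟨-, hl2, -⟩ := hlyap ε hε hεε₀
    field_simp at hf1 hf2 hl2
    have cert := stmt8_cert a11 a12 a21 a22 R ε (a ε) (stil ε) (e11 ε) (e12 ε) (e22 ε)
      (e13 ε) (e23 ε) ha22 hRne
    have key : (e13 ε * ((a11 - a12 * a21 / a22) * (1 - ε * (a12 * a21 / a22 ^ 2)) * R
          + a ε * R - stil ε) + stil ε * e11 ε) *
        ((a11 + (a ε - stil ε / R)) * (a22 + ε * (a ε - stil ε / R)) - a12 * a21) *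
        (R ^ 2 * a22 ^ 4)
      = ε ^ 2 * stil ε *
          (R * (e11 ε * (a11 * a22 - a12 * a21) * (a12 * a21) *
              ((a ε * R - stil ε) * a22 + a12 * a21 * R)
            - a12 * (a11 * e12 ε + a12 * e22 ε) *
              (a22 ^ 2 * ((a11 * a22 - a12 * a21) * R + (a ε * R - stil ε) * a22)
                - ε * (a11 * a22 - a12 * a21) * (a12 * a21) * R))) := by
      linear_combination cert
        - (((a11 * a22 - a12 * a21) * (a22 ^ 2 - ε * (a12 * a21)) * R
            + (a ε * R - stil ε) * a22 ^ 3) *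
          (a22 ^ 2 * R + ε * (a ε * R - stil ε) * a22)) * hf1
        + (((a11 * a22 - a12 * a21) * (a22 ^ 2 - ε * (a12 * a21)) * R
            + (a ε * R - stil ε) * a22 ^ 3) * a12 * a22 * R) * hf2
        - (ε * stil ε * a12 * ((a11 * a22 - a12 * a21) * (a22 ^ 2 - ε * (a12 * a21)) * R
            + (a ε * R - stil ε) * a22 ^ 3) * R) * hl2
    rw [← htEdef, ← hhhEdef, ← hbbdef, ← hKdef, ← hPdef, ← hQPdef] at key
    clear cert hf1 hf2 hl2
    -- assembly
    have hfe : (e13 ε + stil ε * e11 ε / K) * K = e13 ε * K + stil ε * e11 ε := by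
      field_simp [hKne]
    have hexp : (e13 ε + stil ε * e11 ε / K) * (K * (P * (R ^ 2 * a22 ^ 4)))
        = (e13 ε * K + stil ε * e11 ε) * P * (R ^ 2 * a22 ^ 4) := by
      calc (e13 ε + stil ε * e11 ε / K) * (K * (P * (R ^ 2 * a22 ^ 4)))
          = ((e13 ε + stil ε * e11 ε / K) * K) * (P * (R ^ 2 * a22 ^ 4)) := by ring
      _ = (e13 ε * K + stil ε * e11 ε) * (P * (R ^ 2 * a22 ^ 4)) := by rw [hfe]
      _ = (e13 ε * K + stil ε * e11 ε) * P * (R ^ 2 * a22 ^ 4) := by ring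
    have hsplit : (e13 ε + stil ε * e11 ε / K) * (K * (P * (R ^ 2 * a22 ^ 4)))
        = ε ^ 2 * stil ε * QPv := by rw [hexp, key]
    have habs2 : |e13 ε + stil ε * e11 ε / K| * (|K| * (|P| * (R ^ 2 * a22 ^ 4)))
        = ε ^ 2 * (|stil ε| * |QPv|) := by
      have h0 : |(e13 ε + stil ε * e11 ε / K) * (K * (P * (R ^ 2 * a22 ^ 4)))|
          = |e13 ε + stil ε * e11 ε / K| * (|K| * (|P| * (R ^ 2 * a22 ^ 4))) := by
        rw [abs_mul, abs_mul, abs_mul,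
          abs_of_nonneg (by positivity : (0:ℝ) ≤ R ^ 2 * a22 ^ 4)]
      rw [← h0, hsplit, abs_mul, abs_mul,
        abs_of_nonneg (by positivity : (0:ℝ) ≤ ε ^ 2)]
      ring
    have hd0' : R * (-tE) / 2 * ((|a22| * (-tE) / 2) * (R ^ 2 * a22 ^ 4))
        ≤ |K| * (|P| * (R ^ 2 * a22 ^ 4)) := by
      have hinner : (|a22| * (-tE) / 2) * (R ^ 2 * a22 ^ 4) ≤ |P| * (R ^ 2 * a22 ^ 4) :=
        mul_le_mul_of_nonneg_right hPabs (by positivity)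
      have hnn : (0:ℝ) ≤ |a22| * (-tE) / 2 * (R ^ 2 * a22 ^ 4) :=
        mul_nonneg (by linarith only [mul_nonneg (abs_nonneg a22) hmt.le]) (by positivity)
      exact mul_le_mul hKabs hinner hnn (abs_nonneg _)
    have hSQ : |stil ε| * |QPv| ≤ MM * q0 :=
      mul_le_mul hS hQP (abs_nonneg _) hMMpos.le
    have m2 : ε ^ 2 * (|stil ε| * |QPv|) ≤ ε ^ 2 * (MM * q0) :=
      mul_le_mul_of_nonneg_left hSQ (by positivity)
    have m1 : |e13 ε + stil ε * e11 ε / K| *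
          (R * (-tE) / 2 * ((|a22| * (-tE) / 2) * (R ^ 2 * a22 ^ 4)))
        ≤ |e13 ε + stil ε * e11 ε / K| * (|K| * (|P| * (R ^ 2 * a22 ^ 4))) :=
      mul_le_mul_of_nonneg_left hd0' (abs_nonneg _)
    have hε2 : (0:ℝ) ≤ ε ^ 2 := by positivity
    rw [div_mul_eq_mul_div, le_div_iff₀ hd0, hd0def]
    linarith only [m1, habs2.le, habs2.ge, m2, hε2]
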